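/- Let $P_1,\ldots,P_m$ be symmetric positive semidefinite $n\times n$ matrices, $\varphi$ in the probability simplex of $\mathbb{R}^m$, $P(\varphi)=\sum_i \varphi_i P_i$, and $\theta>0$. Then for all $x\in\mathbb{R}^n$, $\frac{4\,x'P(\varphi)P(\varphi)x}{(\theta+x'P(\varphi)x)^2}\le \frac{m}{\theta}\max_{i}\lambda_{\max}(P_i)$, where $\lambda_{\max}$ denotes the largest eigenvalue. -/

import Mathlib

open Matrix


lemma quad_form_le_aux (n : ℕ) (A : Matrix (Fin n) (Fin n) ℝ) (hA : A.IsHermitian)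
    (c : ℝ) (hc : ∀ j, hA.eigenvalues j ≤ c) (y : Fin n → ℝ) :
    y ⬝ᵥ A *ᵥ y ≤ c * (y ⬝ᵥ y) := by
  classical
  set U : Matrix (Fin n) (Fin n) ℝ := (hA.eigenvectorUnitary : Matrix (Fin n) (Fin n) ℝ)
  set z : Fin n → ℝ := star U *ᵥ y with hz
  have hUs : (star U : Matrix (Fin n) (Fin n) ℝ)ᵀ = U := by
    simp [Matrix.star_eq_conjTranspose]
  have hyU : y ᵥ* U = z := by
    rw [← Matrix.mulVec_transpose]
    simp [hz, Matrix.star_eq_conjTranspose]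
  have hyy : y ⬝ᵥ y = z ⬝ᵥ z := by
    have h1 : z ⬝ᵥ z = (U *ᵥ z) ⬝ᵥ y := by
      rw [hz]
      rw [Matrix.dotProduct_mulVec, ← Matrix.mulVec_transpose, hUs]
    have h2 : U *ᵥ z = y := by
      rw [hz, Matrix.mulVec_mulVec, (Matrix.mem_unitaryGroup_iff).mp hA.eigenvectorUnitary.2,
        Matrix.one_mulVec]
    rw [h1, h2, dotProduct_comm]
  have hAz : y ⬝ᵥ A *ᵥ y = ∑ j, hA.eigenvalues j * (z j)^2 := by
    conv_lhs => rw [hA.spectral_theorem]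
    rw [Unitary.conjStarAlgAut_apply]
    rw [← Matrix.mulVec_mulVec, ← Matrix.mulVec_mulVec, Matrix.dotProduct_mulVec, hyU]
    simp only [dotProduct, Matrix.mulVec_diagonal, ← hz, sq]
    exact Finset.sum_congr rfl (fun j _ => by simp [Function.comp]; ring)
  rw [hAz, hyy]
  rw [dotProduct, Finset.mul_sum]
  apply Finset.sum_le_sum
  intro j _
  have := sq_nonneg (z j)
  nlinarith [hc j]

lemma vecMul_eq_mulVec_of_herm {n : ℕ} {M : Matrix (Fin n) (Fin n) ℝ}
    (hM : M.IsHermitian) (v : Fin n → ℝ) : v ᵥ* M = M *ᵥ v := by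
  rw [← Matrix.mulVec_transpose]
  rw [← Matrix.conjTranspose_eq_transpose_of_trivial, hM]

/-- For PSD matrices `P_i`, `φ` in the probability simplex, `P(φ) = ∑ φ_i P_i`
and `θ > 0`: `4 x'P(φ)P(φ)x / (θ + x'P(φ)x)² ≤ (m/θ) maxᵢ λ_max(P_i)`. -/
theorem quadratic_form_ratio_bound (n m : ℕ) [NeZero n] [NeZero m]
    (P : Fin m → Matrix (Fin n) (Fin n) ℝ) (hP : ∀ i, (P i).PosSemidef)
    (φ : Fin m → ℝ) (hφ0 : ∀ i, 0 ≤ φ i) (hφ1 : ∑ i, φ i = 1)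
    (θ : ℝ) (hθ : 0 < θ) (x : Fin n → ℝ) :
    4 * (x ⬝ᵥ ((∑ i, φ i • P i) * (∑ i, φ i • P i)) *ᵥ x) /
        (θ + x ⬝ᵥ (∑ i, φ i • P i) *ᵥ x) ^ 2
      ≤ (m / θ) * ⨆ i, ⨆ j, (hP i).1.eigenvalues j := by
  classical
  set Q : Matrix (Fin n) (Fin n) ℝ := ∑ i, φ i • P i with hQdef
  set lam : ℝ := ⨆ i, ⨆ j, (hP i).1.eigenvalues j with hlam
  -- Q is hermitian
  have hQH : Q.IsHermitian := by
    rw [hQdef, Matrix.IsHermitian, Matrix.conjTranspose_sum]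
    exact Finset.sum_congr rfl fun i _ => by
      rw [Matrix.conjTranspose_smul, (hP i).1, star_trivial]
  -- quadratic form of Q as a sum
  have hQform : ∀ v : Fin n → ℝ, v ⬝ᵥ Q *ᵥ v = ∑ i, φ i * (v ⬝ᵥ P i *ᵥ v) := by
    intro v
    rw [hQdef]
    have : ∀ (s : Finset (Fin m)),
        v ⬝ᵥ (∑ i ∈ s, φ i • P i) *ᵥ v = ∑ i ∈ s, φ i * (v ⬝ᵥ P i *ᵥ v) := by
      intro s
      induction s using Finset.induction with
      | empty => simp
      | insert a s h ih =>
          rw [Finset.sum_insert h, Finset.sum_insert h, Matrix.add_mulVec,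
            dotProduct_add, ih, Matrix.smul_mulVec, dotProduct_smul,
            smul_eq_mul]
    exact this Finset.univ
  -- Q is PSD
  have hQ : Q.PosSemidef := by
    refine Matrix.PosSemidef.of_dotProduct_mulVec_nonneg hQH fun v => ?_
    rw [star_trivial, hQform v]
    exact Finset.sum_nonneg fun i _ => mul_nonneg (hφ0 i) (by simpa using (hP i).dotProduct_mulVec_nonneg v)
  -- eigenvalue bounds
  have hbdd : ∀ i : Fin m, BddAbove (Set.range fun j => (hP i).1.eigenvalues j) :=
    fun i => Set.Finite.bddAbove (Set.finite_range _)
  have hlamup : ∀ i j, (hP i).1.eigenvalues j ≤ lam := by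
    intro i j
    refine le_trans (le_ciSup (hbdd i) j) ?_
    exact le_ciSup (f := fun i => ⨆ j, (hP i).1.eigenvalues j)
      (Set.Finite.bddAbove (Set.finite_range _)) i
  have hlam0 : 0 ≤ lam := by
    obtain ⟨i0⟩ : Nonempty (Fin m) := inferInstance
    obtain ⟨j0⟩ : Nonempty (Fin n) := inferInstance
    exact le_trans ((hP i0).eigenvalues_nonneg j0) (hlamup i0 j0)
  -- quadratic form of Q bounded by lam * |y|^2
  have hAq : ∀ y : Fin n → ℝ, y ⬝ᵥ Q *ᵥ y ≤ lam * (y ⬝ᵥ y) := by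
    intro y
    rw [hQform y]
    calc ∑ i, φ i * (y ⬝ᵥ P i *ᵥ y) ≤ ∑ i, φ i * (lam * (y ⬝ᵥ y)) := by
          refine Finset.sum_le_sum fun i _ => mul_le_mul_of_nonneg_left ?_ (hφ0 i)
          exact quad_form_le_aux n (P i) (hP i).1 lam (hlamup i) y
      _ = lam * (y ⬝ᵥ y) := by rw [← Finset.sum_mul, hφ1, one_mul]
  -- square root of Q
  set S : Matrix (Fin n) (Fin n) ℝ := (open scoped MatrixOrder in CFC.sqrt Q) with hSdef
  have hS : S.PosSemidef := by
    open scoped MatrixOrder in exact Matrix.nonneg_iff_posSemidef.mp (CFC.sqrt_nonneg Q)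
  have hSS : S * S = Q := by rw [hSdef, ← pow_two]; open scoped MatrixOrder in exact CFC.sq_sqrt Q hQ.nonneg
  set w : Fin n → ℝ := S *ᵥ x with hw
  set t : ℝ := x ⬝ᵥ Q *ᵥ x with htdef
  have ht0 : 0 ≤ t := by
    have := hQ.dotProduct_mulVec_nonneg x; rwa [star_trivial] at this
  have hww : w ⬝ᵥ w = t := by
    rw [hw, Matrix.dotProduct_mulVec, vecMul_eq_mulVec_of_herm hS.1,
      Matrix.mulVec_mulVec, hSS, dotProduct_comm]
  have hkey : x ⬝ᵥ (Q * Q) *ᵥ x ≤ lam * t := by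
    have h1 : x ⬝ᵥ (Q * Q) *ᵥ x = (Q *ᵥ x) ⬝ᵥ (Q *ᵥ x) := by
      rw [← Matrix.mulVec_mulVec, Matrix.dotProduct_mulVec, vecMul_eq_mulVec_of_herm hQH]
    have hQx : Q *ᵥ x = S *ᵥ w := by rw [hw, Matrix.mulVec_mulVec, hSS]
    have h2 : (Q *ᵥ x) ⬝ᵥ (Q *ᵥ x) = w ⬝ᵥ Q *ᵥ w := by
      rw [hQx, Matrix.dotProduct_mulVec, vecMul_eq_mulVec_of_herm hS.1,
        Matrix.mulVec_mulVec, hSS, dotProduct_comm]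
    calc x ⬝ᵥ (Q * Q) *ᵥ x = w ⬝ᵥ Q *ᵥ w := by rw [h1, h2]
      _ ≤ lam * (w ⬝ᵥ w) := hAq w
      _ = lam * t := by rw [hww]
  -- final arithmetic
  have hm1 : (1 : ℝ) ≤ m := by
    exact_mod_cast Nat.one_le_iff_ne_zero.mpr (NeZero.ne m)
  have hden : 0 < (θ + t) ^ 2 := by positivity
  rw [div_le_iff₀ hden]
  have heq : (↑m / θ) * lam * (θ + t) ^ 2 = (↑m * (lam * (θ + t) ^ 2)) / θ := by ring
  rw [heq, le_div_iff₀ hθ]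
  have step2 : 4 * (lam * t) * θ ≤ lam * (θ + t) ^ 2 := by
    nlinarith [mul_nonneg hlam0 (sq_nonneg (θ - t))]
  have step3 : lam * (θ + t) ^ 2 ≤ ↑m * (lam * (θ + t) ^ 2) := by
    nlinarith [mul_nonneg hlam0 (sq_nonneg (θ + t))]
  have step1 := mul_le_mul_of_nonneg_right hkey hθ.le
  linarith
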